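/- Let r = (√5 − 1)/2 and t = (1 + r²)/2. Then for all q ∈ [0,1] and s ∈ [0,1], q·t + (1−q)·(r + (1−r)·s − s²/2) ≤ (2√5 − 4)·(r²/4 + r + 3/4), and moreover (2√5 − 4)·(r²/4 + r + 3/4) = (5 − √5)/4 = t. -/
import Mathlib

/-- With `r = (√5 - 1)/2` and `t = (1 + r²)/2`, for all `q, s ∈ [0,1]`,
`q·t + (1-q)·(r + (1-r)·s - s²/2) ≤ (2√5 - 4)·(r²/4 + r + 3/4)`, and moreover
`(2√5 - 4)·(r²/4 + r + 3/4) = (5 - √5)/4 = t`. -/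
theorem stmt_5 (r t : ℝ) (hr : r = (Real.sqrt 5 - 1) / 2) (ht : t = (1 + r ^ 2) / 2) :
    (∀ q ∈ Set.Icc (0 : ℝ) 1, ∀ s ∈ Set.Icc (0 : ℝ) 1,
      q * t + (1 - q) * (r + (1 - r) * s - s ^ 2 / 2)
        ≤ (2 * Real.sqrt 5 - 4) * (r ^ 2 / 4 + r + 3 / 4)) ∧
    (2 * Real.sqrt 5 - 4) * (r ^ 2 / 4 + r + 3 / 4) = (5 - Real.sqrt 5) / 4 ∧
    (5 - Real.sqrt 5) / 4 = t := by
  have h5 : Real.sqrt 5 ^ 2 = 5 := Real.sq_sqrt (by norm_num)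
  have e1 : (2 * Real.sqrt 5 - 4) * (r ^ 2 / 4 + r + 3 / 4) = (5 - Real.sqrt 5) / 4 := by
    subst hr
    linear_combination ((2 * Real.sqrt 5 + 8) / 16) * h5
  have e2 : (5 - Real.sqrt 5) / 4 = t := by
    subst ht hr
    linear_combination (-1 / 8 : ℝ) * h5
  refine ⟨?_, e1, e2⟩
  rintro q ⟨hq0, hq1⟩ s ⟨hs0, hs1⟩
  have hg : r + (1 - r) * s - s ^ 2 / 2 ≤ t := by
    nlinarith [sq_nonneg (s - (1 - r))]
  rw [e1, ← e2] at *
  nlinarith [mul_nonneg (sub_nonneg.2 hq1) (sub_nonneg.2 hg)]
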